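/- Suppose θ₀' is an even function (as holds for the standard symmetric potential W(ρ) = ¼ρ²(1−ρ)² with θ₀(z) = ½(1 + tanh(z/(2√2)))). Then Ψ₀(z;−V) = Ψ₀(−z;V) for all z, V ∈ ℝ, so Φ_β is an even function: Φ_β(−V) = Φ_β(V) for all V. Consequently the equation 2c₀V = Φ_β(V) − Φ_β(−V) has V = 0 as its unique real solution. -/

import Mathlib

open Filter MeasureTheory Real

/-- The standard double-well potential `W(ρ) = ¼ ρ² (1-ρ)²`. -/
noncomputable def W (ρ : ℝ) : ℝ := (1 / 4) * ρ ^ 2 * (1 - ρ) ^ 2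

/-- The standing wave profile `θ₀(z) = ½ (1 + tanh (z / (2√2)))`. -/
noncomputable def θ₀ (z : ℝ) : ℝ := (1 / 2) * (1 + Real.tanh (z / (2 * Real.sqrt 2)))

/-- `c₀ = ∫_ℝ (θ₀'(z))² dz`. -/
noncomputable def c₀ : ℝ := ∫ z : ℝ, (deriv θ₀ z) ^ 2

/-- `Ψ` is a bounded `C²` solution of `-Ψ'' - VΨ' + Ψ + βθ₀' = 0` on `ℝ`
vanishing at `±∞`. -/
def IsBddSol (β V : ℝ) (Ψ : ℝ → ℝ) : Prop :=
  ContDiff ℝ 2 Ψ ∧ (∃ M : ℝ, ∀ z : ℝ, |Ψ z| ≤ M) ∧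
    (∀ z : ℝ, -(deriv (deriv Ψ) z) - V * deriv Ψ z + Ψ z + β * deriv θ₀ z = 0) ∧
    Tendsto Ψ atBot (nhds 0) ∧ Tendsto Ψ atTop (nhds 0)

/-- `Φ_β(V) = ∫_ℝ Ψ₀(z; V) (θ₀'(z))² dz`. -/
noncomputable def Phi (Ψ₀ : ℝ → ℝ → ℝ) (V : ℝ) : ℝ :=
  ∫ z : ℝ, Ψ₀ V z * (deriv θ₀ z) ^ 2

/-! ### Auxiliary lemmas -/

noncomputable def kk : ℝ := 2 * Real.sqrt 2

lemma kk_pos : 0 < kk := by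
  have : (0:ℝ) < Real.sqrt 2 := Real.sqrt_pos.mpr (by norm_num)
  unfold kk; linarith

lemma hasDerivAt_tanh' (x : ℝ) : HasDerivAt Real.tanh (1 / Real.cosh x ^ 2) x := by
  have h := (Real.hasDerivAt_sinh x).div (Real.hasDerivAt_cosh x) (Real.cosh_pos x).ne'
  have e : Real.cosh x * Real.cosh x - Real.sinh x * Real.sinh x = 1 := by
    have := Real.cosh_sq_sub_sinh_sq x; nlinarith
  rw [e] at h
  have ht : Real.tanh = fun y => Real.sinh y / Real.cosh y :=
    funext fun y => Real.tanh_eq_sinh_div_cosh y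
  rw [ht]; exact h

lemma θ₀_hasDerivAt (z : ℝ) :
    HasDerivAt θ₀ (1 / (2 * kk * Real.cosh (z / kk) ^ 2)) z := by
  have h1 : HasDerivAt (fun z : ℝ => z / kk) (1 / kk) z := by
    simpa using (hasDerivAt_id z).div_const kk
  have h2 := (hasDerivAt_tanh' (z / kk)).comp z h1
  have h3 := ((h2.const_add (1 : ℝ)).const_mul ((1 : ℝ) / 2))
  have hθ : θ₀ = fun z => (1 / 2) * (1 + Real.tanh (z / kk)) := rfl
  rw [hθ]
  refine h3.congr_deriv ?_
  have hc := (Real.cosh_pos (z / kk)).ne'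
  have := kk_pos.ne'
  field_simp

lemma deriv_θ₀ (z : ℝ) : deriv θ₀ z = 1 / (2 * kk * Real.cosh (z / kk) ^ 2) :=
  (θ₀_hasDerivAt z).deriv

lemma deriv_θ₀_pos (z : ℝ) : 0 < deriv θ₀ z := by
  rw [deriv_θ₀]
  have := kk_pos
  have := Real.cosh_pos (z / kk)
  positivity

lemma deriv_θ₀_even (z : ℝ) : deriv θ₀ (-z) = deriv θ₀ z := by
  rw [deriv_θ₀, deriv_θ₀, neg_div, Real.cosh_neg]

lemma g_bound (x : ℝ) :
    (deriv θ₀ x) ^ 2 ≤ 4 / kk ^ 2 * Real.exp (-(4 / kk) * x) := by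
  have hk := kk_pos
  have hc := Real.cosh_pos (x / kk)
  have he : Real.exp (x / kk) ≤ 2 * Real.cosh (x / kk) := by
    rw [Real.cosh_eq]
    have := Real.exp_pos (-(x / kk))
    linarith
  have he4 : Real.exp (x / kk) ^ 4 ≤ 16 * Real.cosh (x / kk) ^ 4 := by
    calc Real.exp (x / kk) ^ 4 ≤ (2 * Real.cosh (x / kk)) ^ 4 :=
          pow_le_pow_left₀ (Real.exp_pos _).le he 4
      _ = 16 * Real.cosh (x / kk) ^ 4 := by ring
  have hexp : Real.exp (x / kk) ^ 4 = Real.exp ((4 / kk) * x) := by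
    rw [← Real.exp_nat_mul]
    congr 1
    push_cast
    field_simp
  rw [deriv_θ₀, neg_mul, Real.exp_neg, ← hexp]
  have h1 : (1 / (2 * kk * Real.cosh (x / kk) ^ 2)) ^ 2
      = 1 / (4 * kk ^ 2 * Real.cosh (x / kk) ^ 4) := by
    field_simp; ring
  have h2 : 4 / kk ^ 2 * (Real.exp (x / kk) ^ 4)⁻¹
      = 4 / (kk ^ 2 * Real.exp (x / kk) ^ 4) := by
    field_simp
  rw [h1, h2, div_le_div_iff₀ (by positivity) (by positivity)]
  nlinarith [he4, sq_nonneg kk, sq_nonneg (kk * Real.exp (x / kk) ^ 2), (Real.exp_pos (x / kk)).le]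

lemma g_continuous : Continuous fun z : ℝ => (deriv θ₀ z) ^ 2 := by
  have : (fun z : ℝ => (deriv θ₀ z) ^ 2)
      = fun z => (1 / (2 * kk * Real.cosh (z / kk) ^ 2)) ^ 2 := by
    funext z; rw [deriv_θ₀]
  rw [this]
  have hd : ∀ z : ℝ, 2 * kk * Real.cosh (z / kk) ^ 2 ≠ 0 := fun z => by
    have := kk_pos; have := Real.cosh_pos (z / kk); positivity
  exact ((continuous_const.div (by fun_prop) hd).pow 2)

lemma g_integrable : Integrable fun z : ℝ => (deriv θ₀ z) ^ 2 := by
  have hk := kk_pos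
  have hIoi : IntegrableOn (fun z : ℝ => (deriv θ₀ z) ^ 2) (Set.Ioi 0) := by
    apply integrable_of_isBigO_exp_neg (a := 0) (b := 4 / kk) (by positivity)
      g_continuous.continuousOn
    apply Asymptotics.IsBigO.of_bound (4 / kk ^ 2)
    filter_upwards with x
    rw [Real.norm_eq_abs, Real.norm_eq_abs, abs_of_nonneg (by positivity),
      abs_of_nonneg (Real.exp_pos _).le]
    exact g_bound x
  have hIio : IntegrableOn (fun z : ℝ => (deriv θ₀ z) ^ 2) (Set.Iio 0) := by
    rw [← (Measure.measurePreserving_neg (volume : Measure ℝ)).integrableOn_comp_preimage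
        (Homeomorph.neg ℝ).measurableEmbedding]
    have hpre : (Neg.neg ⁻¹' (Set.Iio (0:ℝ))) = Set.Ioi 0 := by
      ext x; simp
    have hcomp : ((fun z : ℝ => (deriv θ₀ z) ^ 2) ∘ Neg.neg) = fun z : ℝ => (deriv θ₀ z) ^ 2 :=
      funext fun x => by simp [Function.comp, deriv_θ₀_even]
    rw [hpre, hcomp]
    exact hIoi
  rw [← integrableOn_univ, ← Set.Iio_union_Ici (a := (0:ℝ)), integrableOn_union,
    integrableOn_Ici_iff_integrableOn_Ioi]
  exact ⟨hIio, hIoi⟩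

lemma c₀_pos : 0 < c₀ := by
  unfold c₀
  rw [integral_pos_iff_support_of_nonneg (fun z => by positivity) g_integrable]
  have : (Function.support fun z : ℝ => (deriv θ₀ z) ^ 2) = Set.univ := by
    ext z; simp only [Function.mem_support, Set.mem_univ, iff_true]
    exact ne_of_gt (by have := deriv_θ₀_pos z; positivity)
  rw [this]
  simpa using (measure_univ_pos (μ := (volume : Measure ℝ))).mpr (NeZero.ne _)

/-- if `θ₀'` is even (as holds for the symmetric potential above), then
`Ψ₀(z; -V) = Ψ₀(-z; V)`, so `Φ_β` is even, and consequently `V = 0` is the unique real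
solution of `2c₀V = Φ_β(V) - Φ_β(-V)`. -/
theorem phi_even_and_zero_unique_root
    (hEven : ∀ z : ℝ, deriv θ₀ (-z) = deriv θ₀ z)
    (β : ℝ) (hβ : 0 < β) (Ψ₀ : ℝ → ℝ → ℝ)
    (hΨ : ∀ V : ℝ, IsBddSol β V (Ψ₀ V))
    (hΨuniq : ∀ V : ℝ, ∀ Ψ' : ℝ → ℝ, IsBddSol β V Ψ' → Ψ' = Ψ₀ V) :
    (∀ z V : ℝ, Ψ₀ (-V) z = Ψ₀ V (-z)) ∧
    (∀ V : ℝ, Phi Ψ₀ (-V) = Phi Ψ₀ V) ∧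
    (∀ V : ℝ, 2 * c₀ * V = Phi Ψ₀ V - Phi Ψ₀ (-V) ↔ V = 0) := by
  have key : ∀ z V : ℝ, Ψ₀ (-V) z = Ψ₀ V (-z) := by
    intro z V
    obtain ⟨hC, ⟨M, hM⟩, hode, hbot, htop⟩ := hΨ V
    have hn : IsBddSol β (-V) fun z => Ψ₀ V (-z) := by
      refine ⟨hC.comp contDiff_neg, ⟨M, fun z => hM (-z)⟩, ?_, ?_, ?_⟩
      · intro z
        have d1 : deriv (fun z => Ψ₀ V (-z)) = fun z => -deriv (Ψ₀ V) (-z) :=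
          funext fun z => deriv_comp_neg _ _
        have d2 : deriv (deriv fun z => Ψ₀ V (-z)) z = deriv (deriv (Ψ₀ V)) (-z) := by
          rw [d1]
          have hneg : deriv (fun z => -deriv (Ψ₀ V) (-z)) z
              = -deriv (fun z => deriv (Ψ₀ V) (-z)) z := deriv.neg
          rw [hneg, deriv_comp_neg, neg_neg]
        have d1z : deriv (fun z => Ψ₀ V (-z)) z = -deriv (Ψ₀ V) (-z) := by rw [d1]
        rw [d2, d1z, ← hEven z]
        linarith [hode (-z)]
      · exact htop.comp tendsto_neg_atBot_atTop
      · exact hbot.comp tendsto_neg_atTop_atBot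
    exact (congrFun (hΨuniq (-V) _ hn) z).symm
  have phiEven : ∀ V : ℝ, Phi Ψ₀ (-V) = Phi Ψ₀ V := by
    intro V
    unfold Phi
    calc (∫ z : ℝ, Ψ₀ (-V) z * (deriv θ₀ z) ^ 2)
        = ∫ z : ℝ, Ψ₀ V (-z) * (deriv θ₀ (-z)) ^ 2 := by
          congr 1; funext z; rw [key z V, hEven]
      _ = ∫ z : ℝ, Ψ₀ V z * (deriv θ₀ z) ^ 2 := integral_neg_eq_self (fun z : ℝ => Ψ₀ V z * (deriv θ₀ z) ^ 2) volume
  refine ⟨key, phiEven, fun V => ?_⟩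
  rw [phiEven V, sub_self]
  constructor
  · intro h
    have hc := c₀_pos
    rcases mul_eq_zero.mp h with h' | h'
    · rcases mul_eq_zero.mp h' with h'' | h''
      · norm_num at h''
      · exact absurd h'' hc.ne'
    · exact h'
  · intro h; rw [h, mul_zero]
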